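/- Let p be a prime, let k ≥ 1, a ∈ ℤ, d ≥ 1 be integers and let s_1,…,s_d ≥ 1. Set w = s_1 + ⋯ + s_d. Then (p^k)^w · H_{ap^k<(a+1)p^k}(s_d,…,s_1) − p^w · H_p(s_d,…,s_1) has p-adic valuation at least w + 1, i.e. p-adic absolute value at most p^{−(w+1)}. -/

import Mathlib

open Finset

/-- The multiple harmonic sum `H_{M<N}(s_d,…,s_1) = ∑_{M<n_1<⋯<n_d<N} 1/(n_1^{s_1}⋯n_d^{s_d})`,
viewed in `ℚ_p`; the index `n_i` is paired with the exponent `s_i`. -/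
noncomputable def mhs (p : ℕ) [Fact p.Prime] {d : ℕ} (M N : ℤ) (s : Fin d → ℕ) : ℚ_[p] :=
  ∑ n ∈ (Fintype.piFinset fun _ : Fin d => Finset.Ioo M N).filter
      (fun n => ∀ i j : Fin d, i < j → n i < n j),
    ∏ i, 1 / (n i : ℚ_[p]) ^ s i

section aux
variable {p : ℕ} [hp : Fact p.Prime]

lemma aux_norm_int_lb {z : ℤ} {m : ℕ} (h : ¬ ((p:ℤ)^(m+1) ∣ z)) :
    ((p:ℝ)⁻¹)^m ≤ ‖(z : ℚ_[p])‖ := by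
  have hz : z ≠ 0 := by rintro rfl; exact h (dvd_zero _)
  have hv : padicValInt p z ≤ m := by
    by_contra hle
    exact h ((padicValInt_dvd_iff _ _).mpr (Or.inr (by omega)))
  have hnz : (z : ℚ_[p]) ≠ 0 := Int.cast_ne_zero.mpr hz
  rw [Padic.norm_eq_zpow_neg_valuation hnz, Padic.valuation_intCast, inv_pow, ← zpow_natCast, ← zpow_neg]
  exact zpow_le_zpow_right₀ (by exact_mod_cast hp.out.one_le) (by omega)

lemma aux_unit {z : ℤ} (h : ¬ ((p:ℤ) ∣ z)) : ‖(z : ℚ_[p])‖ = 1 :=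
  le_antisymm (Padic.norm_int_le_one z)
    (not_lt.mp fun hlt => h ((Padic.norm_intCast_lt_one_iff (k := z)).mp hlt))

lemma aux_div_norm {k t : ℕ} {z : ℤ} (ht : t ≤ k) (h : ¬ ((p:ℤ)^(k - t + 1) ∣ z)) :
    ‖(p:ℚ_[p])^k / (z : ℚ_[p])‖ ≤ ((p:ℝ)⁻¹)^t := by
  have hz : z ≠ 0 := by rintro rfl; exact h (dvd_zero _)
  have hnz : (0:ℝ) < ‖(z : ℚ_[p])‖ := norm_pos_iff.mpr (Int.cast_ne_zero.mpr hz)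
  have hlb := aux_norm_int_lb h
  have hppos : (0:ℝ) < (p:ℝ)⁻¹ := by have := hp.out.pos; positivity
  rw [norm_div, norm_pow, Padic.norm_p, div_le_iff₀ hnz]
  calc ((p:ℝ)⁻¹)^k = ((p:ℝ)⁻¹)^t * ((p:ℝ)⁻¹)^(k-t) := by
        rw [← pow_add]; congr 1; omega
    _ ≤ ((p:ℝ)⁻¹)^t * ‖(z : ℚ_[p])‖ := by
        exact mul_le_mul_of_nonneg_left hlb (by positivity)

lemma aux_prod_sub_prod {ι : Type*} (t : Finset ι) (α β : ι → ℚ_[p]) (ε : ι → ℝ) (δ : ℝ)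
    (hδ : 0 ≤ δ) (hε : ∀ i, 0 ≤ ε i)
    (hα : ∀ i ∈ t, ‖α i‖ ≤ ε i) (hβ : ∀ i ∈ t, ‖β i‖ ≤ ε i)
    (hab : ∀ i ∈ t, ‖α i - β i‖ ≤ δ * ε i) :
    ‖∏ i ∈ t, α i - ∏ i ∈ t, β i‖ ≤ δ * ∏ i ∈ t, ε i := by
  classical
  induction t using Finset.induction with
  | empty => simp [hδ]
  | insert j t' hj ih =>
    rw [Finset.prod_insert hj, Finset.prod_insert hj, Finset.prod_insert hj]
    have key : α j * ∏ i ∈ t', α i - β j * ∏ i ∈ t', β i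
        = α j * (∏ i ∈ t', α i - ∏ i ∈ t', β i) + (α j - β j) * ∏ i ∈ t', β i := by ring
    rw [key]
    refine le_trans (Padic.nonarchimedean _ _) (max_le ?_ ?_)
    · rw [norm_mul]
      calc ‖α j‖ * ‖∏ i ∈ t', α i - ∏ i ∈ t', β i‖
          ≤ ε j * (δ * ∏ i ∈ t', ε i) := by
            refine mul_le_mul (hα j (mem_insert_self _ _))
              (ih (fun i hi => hα i (mem_insert_of_mem hi))
                  (fun i hi => hβ i (mem_insert_of_mem hi))
                  (fun i hi => hab i (mem_insert_of_mem hi))) (norm_nonneg _)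
              (hε j)
        _ = δ * (ε j * ∏ i ∈ t', ε i) := by ring
    · rw [norm_mul]
      have hprod : ‖∏ i ∈ t', β i‖ ≤ ∏ i ∈ t', ε i := by
        rw [norm_prod]
        exact Finset.prod_le_prod (fun i _ => norm_nonneg _)
          (fun i hi => hβ i (mem_insert_of_mem hi))
      calc ‖α j - β j‖ * ‖∏ i ∈ t', β i‖
          ≤ (δ * ε j) * ∏ i ∈ t', ε i :=
            mul_le_mul (hab j (mem_insert_self _ _)) hprod (norm_nonneg _)
              (mul_nonneg hδ (hε j))
        _ = δ * (ε j * ∏ i ∈ t', ε i) := by ring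

end aux

set_option maxHeartbeats 1000000 in
/-- `(p^k)^w · H_{ap^k<(a+1)p^k}(s_d,…,s_1) − p^w · H_p(s_d,…,s_1)` has `p`-adic valuation at
least `w + 1`, where `w = s_1 + ⋯ + s_d` is the weight. -/
theorem finite_mzv_congruence (p : ℕ) [Fact p.Prime] (k : ℕ) (hk : 1 ≤ k) (a : ℤ)
    (d : ℕ) (hd : 1 ≤ d) (s : Fin d → ℕ) (hs : ∀ i, 1 ≤ s i) :
    ‖((p : ℚ_[p]) ^ k) ^ (∑ i, s i) *
          mhs p (a * (p : ℤ) ^ k) ((a + 1) * (p : ℤ) ^ k) s -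
        (p : ℚ_[p]) ^ (∑ i, s i) * mhs p 0 (p : ℤ) s‖
      ≤ (p : ℝ) ^ (-((∑ i, s i : ℤ) + 1)) := by
  classical
  have hpp : p.Prime := Fact.out
  have hp2 : 2 ≤ p := hpp.two_le
  have hpR : (1:ℝ) ≤ (p:ℝ) := by exact_mod_cast hpp.one_le
  have hpinv_pos : (0:ℝ) < (p:ℝ)⁻¹ := by
    have h0 : (0:ℝ) < (p:ℝ) := by exact_mod_cast hpp.pos
    positivity
  have hpinv_le1 : (p:ℝ)⁻¹ ≤ 1 := inv_le_one_of_one_le₀ hpR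
  have hpZ : (0:ℤ) < (p:ℤ) := by exact_mod_cast hpp.pos
  have hpk1pos : (0:ℤ) < (p:ℤ)^(k-1) := by positivity
  have hpkQ : ((p:ℤ):ℚ_[p]) ≠ 0 := by
    exact_mod_cast (Int.cast_ne_zero (α := ℚ_[p])).mpr (by positivity : (p:ℤ) ≠ 0)
  have hexp : (a+1) * (p:ℤ)^k = a * (p:ℤ)^k + (p:ℤ)^k := by ring
  set w := ∑ i, s i with hw
  -- the sets and summands
  set A := (Fintype.piFinset fun _ : Fin d => Finset.Ioo (a * (p:ℤ)^k) ((a+1) * (p:ℤ)^k)).filter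
      (fun n => ∀ i j : Fin d, i < j → n i < n j) with hA
  set B := (Fintype.piFinset fun _ : Fin d => Finset.Ioo (0:ℤ) (p:ℤ)).filter
      (fun n => ∀ i j : Fin d, i < j → n i < n j) with hB
  set F : (Fin d → ℤ) → ℚ_[p] := fun n => ∏ i, ((p:ℚ_[p])^k / (n i : ℚ_[p]))^(s i) with hFdef
  set G : (Fin d → ℤ) → ℚ_[p] := fun c => ∏ i, ((p:ℚ_[p]) / (c i : ℚ_[p]))^(s i) with hGdef
  have hF : ((p:ℚ_[p])^k)^w * mhs p (a * (p:ℤ)^k) ((a+1) * (p:ℤ)^k) s = ∑ n ∈ A, F n := by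
    rw [hw, mhs, Finset.mul_sum]
    refine Finset.sum_congr rfl fun n _ => ?_
    rw [← Finset.prod_pow_eq_pow_sum, ← Finset.prod_mul_distrib]
    exact Finset.prod_congr rfl fun i _ => by rw [mul_one_div, ← div_pow]
  have hG : ((p:ℚ_[p]))^w * mhs p 0 (p:ℤ) s = ∑ c ∈ B, G c := by
    rw [hw, mhs, Finset.mul_sum]
    refine Finset.sum_congr rfl fun n _ => ?_
    rw [← Finset.prod_pow_eq_pow_sum, ← Finset.prod_mul_distrib]
    exact Finset.prod_congr rfl fun i _ => by rw [mul_one_div, ← div_pow]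
  -- the embedding of B into A
  set φ : (Fin d → ℤ) → (Fin d → ℤ) := fun c i => a * (p:ℤ)^k + c i * (p:ℤ)^(k-1) with hφ
  have hφinj : Function.Injective φ := by
    intro c c' h
    funext i
    have := congrFun h i
    simp only [hφ, add_right_inj] at this
    exact mul_right_cancel₀ (by positivity) this
  have hpkk : (p:ℤ)^k = (p:ℤ)^(k-1) * p := by
    rw [← pow_succ]; congr 1; omega
  have hφB : ∀ c ∈ B, φ c ∈ A := by
    intro c hc
    rw [hB, Finset.mem_filter] at hc
    obtain ⟨hc1, hc2⟩ := hc
    rw [hA, Finset.mem_filter]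
    constructor
    · rw [Fintype.mem_piFinset]
      intro i
      have hci := Fintype.mem_piFinset.mp hc1 i
      rw [Finset.mem_Ioo] at hci
      simp only [hφ, Finset.mem_Ioo]
      constructor
      · nlinarith [mul_pos hci.1 hpk1pos]
      · nlinarith [mul_lt_mul_of_pos_right hci.2 hpk1pos, hpkk, hexp]
    · intro i j hij
      simp only [hφ]
      have := mul_lt_mul_of_pos_right (hc2 i j hij) hpk1pos
      linarith
  have himsub : B.image φ ⊆ A := by
    intro n hn
    obtain ⟨c, hc, rfl⟩ := Finset.mem_image.mp hn
    exact hφB c hc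
  -- splitting
  have hsum_im : ∑ n ∈ B.image φ, F n = ∑ c ∈ B, F (φ c) :=
    Finset.sum_image (fun x _ y _ h => hφinj h)
  have hsplit : ((p:ℚ_[p])^k)^w * mhs p (a * (p:ℤ)^k) ((a+1) * (p:ℤ)^k) s -
      ((p:ℚ_[p]))^w * mhs p 0 (p:ℤ) s
      = (∑ n ∈ A \ B.image φ, F n) + ∑ c ∈ B, (F (φ c) - G c) := by
    rw [hF, hG, ← Finset.sum_sdiff himsub, hsum_im, Finset.sum_sub_distrib]
    ring
  -- bound on the leftover terms
  have hbound1 : ∀ n ∈ A \ B.image φ, ‖F n‖ ≤ ((p:ℝ)⁻¹)^(w+1) := by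
    intro n hn
    obtain ⟨hnA, hnim⟩ := Finset.mem_sdiff.mp hn
    rw [hA, Finset.mem_filter] at hnA
    have hmem : ∀ i, a * (p:ℤ)^k < n i ∧ n i < (a+1) * (p:ℤ)^k := by
      intro i
      have := Fintype.mem_piFinset.mp hnA.1 i
      rwa [Finset.mem_Ioo] at this
    have hex : ∃ j, ¬ ((p:ℤ)^(k-1) ∣ (n j - a * (p:ℤ)^k)) := by
      by_contra hcon
      push_neg at hcon
      apply hnim
      refine Finset.mem_image.mpr ⟨fun i => (n i - a * (p:ℤ)^k) / (p:ℤ)^(k-1), ?_, ?_⟩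
      · rw [hB, Finset.mem_filter]
        have hdiv : ∀ i, (n i - a * (p:ℤ)^k) / (p:ℤ)^(k-1) * (p:ℤ)^(k-1)
            = n i - a * (p:ℤ)^k := fun i => Int.ediv_mul_cancel (hcon i)
        constructor
        · rw [Fintype.mem_piFinset]
          intro i
          rw [Finset.mem_Ioo]
          have h1 : 0 < n i - a * (p:ℤ)^k := by have := (hmem i).1; omega
          have h2 : n i - a * (p:ℤ)^k < (p:ℤ)^k := by have := (hmem i).2; linarith [hexp]
          constructor
          · by_contra hle
            push_neg at hle
            nlinarith [hdiv i, h1, hpk1pos]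
          · by_contra hle
            push_neg at hle
            nlinarith [hdiv i, h2, hpk1pos, hpkk]
        · intro i j hij
          have hlt : n i < n j := hnA.2 i j hij
          by_contra hle
          push_neg at hle
          nlinarith [hdiv i, hdiv j, hlt, hpk1pos]
      · funext i
        simp only [hφ]
        have := Int.ediv_mul_cancel (hcon i)
        linarith
    obtain ⟨j, hj⟩ := hex
    have hk2 : 2 ≤ k := by
      by_contra hlt
      have : k = 1 := by omega
      subst this
      simp at hj
    -- norms of factors
    have hub : ∀ i, ‖(p:ℚ_[p])^k / ((n i : ℤ) : ℚ_[p])‖ ≤ (p:ℝ)⁻¹ := by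
      intro i
      have hnd : ¬ ((p:ℤ)^(k - 1 + 1) ∣ n i) := by
        rw [show k - 1 + 1 = k from by omega]
        rintro ⟨b, hb⟩
        have h1 : 0 < n i - a * (p:ℤ)^k := by have := (hmem i).1; omega
        have h2 : n i - a * (p:ℤ)^k < (p:ℤ)^k := by have := (hmem i).2; linarith [hexp]
        have hdvd : (p:ℤ)^k ∣ (n i - a * (p:ℤ)^k) := ⟨b - a, by rw [hb]; ring⟩
        have := Int.le_of_dvd h1 hdvd
        omega
      have := aux_div_norm (t := 1) hk hnd
      simpa using this
    have hubj : ‖(p:ℚ_[p])^k / ((n j : ℤ) : ℚ_[p])‖ ≤ ((p:ℝ)⁻¹)^2 := by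
      have hnd : ¬ ((p:ℤ)^(k - 2 + 1) ∣ n j) := by
        rw [show k - 2 + 1 = k - 1 from by omega]
        intro hdvd
        apply hj
        have hdvd2 : (p:ℤ)^(k-1) ∣ a * (p:ℤ)^k := ⟨a * p, by rw [hpkk]; ring⟩
        exact dvd_sub hdvd hdvd2
      exact aux_div_norm (t := 2) hk2 hnd
    rw [hFdef]
    simp only
    rw [norm_prod]
    have hptwise : ∀ i ∈ Finset.univ (α := Fin d),
        ‖((p:ℚ_[p])^k / ((n i : ℤ) : ℚ_[p]))^(s i)‖
          ≤ ((p:ℝ)⁻¹)^(s i + if i = j then 1 else 0) := by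
      intro i _
      rw [norm_pow]
      by_cases hij : i = j
      · subst hij
        simp only [if_pos rfl]
        calc ‖(p:ℚ_[p])^k / ((n i : ℤ) : ℚ_[p])‖ ^ (s i)
            ≤ (((p:ℝ)⁻¹)^2) ^ (s i) := pow_le_pow_left₀ (norm_nonneg _) hubj _
          _ = ((p:ℝ)⁻¹)^(2 * s i) := by rw [← pow_mul]
          _ ≤ ((p:ℝ)⁻¹)^(s i + 1) :=
              pow_le_pow_of_le_one (le_of_lt hpinv_pos) hpinv_le1 (by have := hs i; omega)
      · simp only [if_neg hij, add_zero]
        exact pow_le_pow_left₀ (norm_nonneg _) (hub i) _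
    calc ∏ i, ‖((p:ℚ_[p])^k / ((n i : ℤ) : ℚ_[p]))^(s i)‖
        ≤ ∏ i, ((p:ℝ)⁻¹)^(s i + if i = j then 1 else 0) :=
          Finset.prod_le_prod (fun i _ => norm_nonneg _) hptwise
      _ = ((p:ℝ)⁻¹)^(∑ i, (s i + if i = j then 1 else 0)) := Finset.prod_pow_eq_pow_sum _ _ _
      _ = ((p:ℝ)⁻¹)^(w+1) := by
          congr 1
          rw [Finset.sum_add_distrib, Finset.sum_ite_eq' Finset.univ j (fun _ => 1)]
          simp [hw]
  -- bound on matched terms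
  have hbound2 : ∀ c ∈ B, ‖F (φ c) - G c‖ ≤ ((p:ℝ)⁻¹)^(w+1) := by
    intro c hc
    rw [hB, Finset.mem_filter] at hc
    have hmem : ∀ i, 0 < c i ∧ c i < p := by
      intro i
      have := Fintype.mem_piFinset.mp hc.1 i
      rwa [Finset.mem_Ioo] at this
    have hndvd_c : ∀ i, ¬ ((p:ℤ) ∣ c i) := by
      intro i hdvd
      have := Int.le_of_dvd (hmem i).1 hdvd
      have := (hmem i).2
      omega
    have hndvd_u : ∀ i, ¬ ((p:ℤ) ∣ (a * p + c i)) := by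
      intro i hdvd
      have h2 : (p:ℤ) ∣ a * (p:ℤ) := ⟨a, mul_comm a (p:ℤ)⟩
      have h3 := dvd_sub hdvd h2
      rw [add_sub_cancel_left] at h3
      exact hndvd_c i h3
    have hcne : ∀ i, ((c i : ℤ) : ℚ_[p]) ≠ 0 := by
      intro i
      exact Int.cast_ne_zero.mpr (by have := (hmem i).1; omega)
    have hune : ∀ i, (((a * p + c i : ℤ)) : ℚ_[p]) ≠ 0 := by
      intro i
      refine Int.cast_ne_zero.mpr fun h => hndvd_u i (h ▸ dvd_zero _)
    have hFφ : F (φ c) = ∏ i, ((p:ℚ_[p]) / (((a * p + c i : ℤ)) : ℚ_[p]))^(s i) := by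
      rw [hFdef]
      refine Finset.prod_congr rfl fun i _ => ?_
      congr 1
      have hcast : ((φ c i : ℤ) : ℚ_[p]) = (p:ℚ_[p])^(k-1) * (((a * p + c i : ℤ)) : ℚ_[p]) := by
        simp only [hφ]
        push_cast
        rw [show ((p:ℚ_[p]))^k = (p:ℚ_[p])^(k-1) * p from by rw [← pow_succ]; congr 1; omega]
        ring
      rw [hcast, show ((p:ℚ_[p]))^k = (p:ℚ_[p])^(k-1) * p from by rw [← pow_succ]; congr 1; omega,
        mul_div_mul_left _ _ (pow_ne_zero _ (by exact_mod_cast hpp.ne_zero))]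
    rw [hFφ, hGdef]
    have := aux_prod_sub_prod (p := p) Finset.univ
      (fun i => ((p:ℚ_[p]) / (((a * p + c i : ℤ)) : ℚ_[p]))^(s i))
      (fun i => ((p:ℚ_[p]) / ((c i : ℤ) : ℚ_[p]))^(s i))
      (fun i => ((p:ℝ)⁻¹)^(s i)) ((p:ℝ)⁻¹) (le_of_lt hpinv_pos)
      (fun i => by positivity) ?_ ?_ ?_
    · refine le_trans this (le_of_eq ?_)
      rw [Finset.prod_pow_eq_pow_sum, ← hw, ← pow_succ']
    · intro i _
      rw [norm_pow, norm_div, Padic.norm_p, aux_unit (hndvd_u i), div_one]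
    · intro i _
      rw [norm_pow, norm_div, Padic.norm_p, aux_unit (hndvd_c i), div_one]
    · intro i _
      have key : ((p:ℚ_[p]) / (((a * p + c i : ℤ)) : ℚ_[p]))^(s i)
            - ((p:ℚ_[p]) / ((c i : ℤ) : ℚ_[p]))^(s i)
          = (p:ℚ_[p])^(s i) * (((c i ^ (s i) - (a * p + c i)^(s i) : ℤ)) : ℚ_[p])
            / ((((a * p + c i : ℤ)) : ℚ_[p])^(s i) * (((c i : ℤ)) : ℚ_[p])^(s i)) := by
        rw [div_pow, div_pow,
          div_sub_div _ _ (pow_ne_zero _ (hune i)) (pow_ne_zero _ (hcne i))]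
        congr 1
        push_cast
        ring
      have hdvd : (p:ℤ) ∣ (c i ^ (s i) - (a * p + c i)^(s i)) := by
        have hdd : (p:ℤ) ∣ (a * p + c i) - c i := ⟨a, by ring⟩
        have hmod : (a * p + c i) ≡ c i [ZMOD (p:ℤ)] :=
          (Int.modEq_iff_dvd.mpr hdd : c i ≡ a * p + c i [ZMOD (p:ℤ)]).symm
        exact (hmod.pow (s i)).dvd
      have hnormdvd : ‖(((c i ^ (s i) - (a * p + c i)^(s i) : ℤ)) : ℚ_[p])‖ ≤ (p:ℝ)⁻¹ := by
        have := (Padic.norm_int_le_pow_iff_dvd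
          (c i ^ (s i) - (a * p + c i)^(s i)) 1).mpr (by simpa using hdvd)
        simpa using this
      rw [key, norm_div, norm_mul, norm_mul, norm_pow, norm_pow, norm_pow,
        Padic.norm_p, aux_unit (hndvd_u i), aux_unit (hndvd_c i)]
      simp only [one_pow, mul_one, one_mul, div_one]
      calc ((p:ℝ)⁻¹)^(s i) * ‖(((c i ^ (s i) - (a * p + c i)^(s i) : ℤ)) : ℚ_[p])‖
          ≤ ((p:ℝ)⁻¹)^(s i) * (p:ℝ)⁻¹ :=
            mul_le_mul_of_nonneg_left hnormdvd (by positivity)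
        _ = (p:ℝ)⁻¹ * ((p:ℝ)⁻¹)^(s i) := by ring
  -- assemble
  have hrhs : (p : ℝ) ^ (-((∑ i, (s i:ℤ)) + 1)) = ((p:ℝ)⁻¹)^(w+1) := by
    rw [inv_pow, ← zpow_natCast, ← zpow_neg]
    congr 1
    rw [hw]
    push_cast
    ring
  rw [hrhs, hsplit]
  refine le_trans (Padic.nonarchimedean _ _) (max_le ?_ ?_)
  · exact IsUltrametricDist.norm_sum_le_of_forall_le_of_nonneg (by positivity) hbound1
  · exact IsUltrametricDist.norm_sum_le_of_forall_le_of_nonneg (by positivity) hbound2
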